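/- arXiv:2006.11178 — 2 statements merged into one kernel-verified Lean document; each statement's English description precedes it below -/
import Mathlib

section
/- Let f : [0,∞) → [0,∞) be a nonincreasing function, σ > 0 and ω > 0 constants such that ∫_t^∞ f(s)^{1+σ} ds ≤ (1/ω) f(0)^σ f(t) for all t ≥ 0. Then f(t) ≤ f(0) ((1+σ)/(1+ωσt))^{1/σ} for all t ≥ 0. -/
open MeasureTheory Set Filter Topology

set_option maxHeartbeats 1000000 in
theorem martinez_decay_poly (f : ℝ → ℝ) (σ ω : ℝ) (hσ : 0 < σ) (hω : 0 < ω)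
    (hf_nonneg : ∀ t, 0 ≤ t → 0 ≤ f t)
    (hf_mono : AntitoneOn f (Ici 0))
    (hf_meas : Measurable f)
    (hf_int : ∀ t, 0 ≤ t → IntegrableOn (fun s => f s ^ (1 + σ)) (Ici t))
    (hineq : ∀ t, 0 ≤ t → ∫ s in Ici t, f s ^ (1 + σ) ≤ (1 / ω) * f 0 ^ σ * f t) :
    ∀ t, 0 ≤ t → f t ≤ f 0 * ((1 + σ) / (1 + ω * σ * t)) ^ (1 / σ) := by
  intro t ht
  have hσ1 : (0:ℝ) < 1 + σ := by linarith
  by_cases hf0' : f 0 ≤ 0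
  · have hf00 : f 0 = 0 := le_antisymm hf0' (hf_nonneg 0 le_rfl)
    have hft : f t = 0 :=
      le_antisymm (by simpa [hf00] using hf_mono self_mem_Ici (mem_Ici.2 ht) ht)
        (hf_nonneg t ht)
    rw [hft, hf00, zero_mul]
  push_neg at hf0'
  set g : ℝ → ℝ := fun s => f s ^ (1 + σ) with hgdef
  set F : ℝ → ℝ := fun s => ∫ x in Ici s, g x with hFdef
  set k : ℝ := ω / f 0 ^ σ with hkdef
  have hf0σ : (0:ℝ) < f 0 ^ σ := Real.rpow_pos_of_pos hf0' σ
  have hkpos : 0 < k := div_pos hω hf0σ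
  set A : ℝ := f 0 ^ (1 + σ) / ω with hAdef
  have hApos : 0 < A := div_pos (Real.rpow_pos_of_pos hf0' _) hω
  have hkA : k * A = f 0 := by
    rw [hkdef, hAdef]
    rw [Real.rpow_add hf0' 1 σ, Real.rpow_one]
    field_simp
  have g_nonneg : ∀ s, 0 ≤ s → 0 ≤ g s := fun s hs =>
    Real.rpow_nonneg (hf_nonneg s hs) _
  have g_anti : AntitoneOn g (Ici 0) := fun a ha b hb hab =>
    Real.rpow_le_rpow (hf_nonneg b hb) (hf_mono ha hb hab) hσ1.le
  have F_nonneg : ∀ s, 0 ≤ s → 0 ≤ F s := fun s hs =>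
    setIntegral_nonneg measurableSet_Ici (fun x hx => g_nonneg x (hs.trans hx))
  have F_split : ∀ a z : ℝ, 0 ≤ a → a ≤ z → F a = (∫ x in Ico a z, g x) + F z := by
    intro a z ha haz
    show (∫ x in Ici a, g x) = (∫ x in Ico a z, g x) + ∫ x in Ici z, g x
    rw [← Ico_union_Ici_eq_Ici haz]
    exact setIntegral_union (disjoint_left.2 fun y hy hy' => hy.2.not_ge hy')
      measurableSet_Ici
      ((hf_int a ha).mono_set Ico_subset_Ici_self) (hf_int z (ha.trans haz))
  have key_low : ∀ a z : ℝ, 0 ≤ a → a ≤ z → g z * (z - a) ≤ ∫ x in Ico a z, g x := by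
    intro a z ha haz
    have := setIntegral_ge_of_const_le (c := g z) measurableSet_Ico
      (by simp [Real.volume_Ico])
      (fun x hx => g_anti (mem_Ici.2 (ha.trans hx.1)) (mem_Ici.2 (ha.trans haz)) hx.2.le)
      ((hf_int a ha).mono_set Ico_subset_Ici_self)
    simpa [Real.volume_Ico, ENNReal.toReal_ofReal (sub_nonneg.2 haz), max_eq_left (sub_nonneg.2 haz), mul_comm] using this
  have hkf : ∀ s, 0 ≤ s → k * F s ≤ f s := by
    intro s hs
    have h : F s ≤ (1 / ω) * f 0 ^ σ * f s := hineq s hs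
    rw [hkdef, div_mul_eq_mul_div, div_le_iff₀ hf0σ]
    calc ω * F s ≤ ω * ((1 / ω) * f 0 ^ σ * f s) :=
          mul_le_mul_of_nonneg_left h hω.le
      _ = f s * f 0 ^ σ := by field_simp
  have slope_le : ∀ x z : ℝ, 0 ≤ x → x < z → slope F x z ≤ -((k * F z) ^ (1 + σ)) := by
    intro x z hx hxz
    have hFsplit := F_split x z hx hxz.le
    have hlow := key_low x z hx hxz.le
    have hgz : (k * F z) ^ (1 + σ) ≤ g z := by
      rw [hgdef]
      exact Real.rpow_le_rpow (mul_nonneg hkpos.le (F_nonneg z (hx.trans hxz.le)))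
        (hkf z (hx.trans hxz.le)) hσ1.le
    rw [slope_def_field, div_le_iff₀ (sub_pos.2 hxz)]
    have h1 : (k * F z) ^ (1 + σ) * (z - x) ≤ g z * (z - x) :=
      mul_le_mul_of_nonneg_right hgz (sub_nonneg.2 hxz.le)
    nlinarith [hlow, h1]
  have F_cont : ∀ b : ℝ, 0 ≤ b → ContinuousOn F (Icc 0 b) := by
    intro b hb
    have hInt : IntegrableOn g (Icc 0 b) := (hf_int 0 le_rfl).mono_set Icc_subset_Ici_self
    have hcont := (intervalIntegral.continuousOn_primitive (a := 0) (b := b)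
      (μ := volume) hInt)
    apply ContinuousOn.congr (f := fun x => F 0 - ∫ s in Ioc 0 x, g s)
    · exact continuousOn_const.sub hcont
    · intro x hx
      have := F_split 0 x le_rfl hx.1
      have hIcoIoc : (∫ s in Ico 0 x, g s) = ∫ s in Ioc 0 x, g s :=
        setIntegral_congr_set Ico_ae_eq_Ioc
      rw [this, hIcoIoc]
      ring
  -- main bound on F
  have main : ∀ s : ℝ, 0 ≤ s → F s ≤ A * (1 + σ * ω * s) ^ (-1 / σ) := by
    intro s hs
    have mainε : ∀ ε : ℝ, ε ∈ Ioo (0:ℝ) 1 →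
        F s ≤ A * (1 + ε) * (1 + σ * ω * (1 - ε) * s) ^ (-1 / σ) := by
      intro ε hε
      set c₂ : ℝ := σ * ω * (1 - ε) with hc2
      have hc2pos : 0 < c₂ := by
        apply mul_pos (mul_pos hσ hω)
        linarith [hε.2]
      set B : ℝ → ℝ := fun x => A * (1 + ε) * (1 + c₂ * x) ^ (-1 / σ) with hBdef
      set B' : ℝ → ℝ := fun x =>
        A * (1 + ε) * (c₂ * (-1 / σ) * (1 + c₂ * x) ^ (-1 / σ - 1)) with hB'def
      have hu : ∀ x : ℝ, 0 ≤ x → 0 < 1 + c₂ * x := by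
        intro x hx
        nlinarith
      have hBderiv : ∀ x : ℝ, 0 ≤ x → HasDerivAt B (B' x) x := by
        intro x hx
        have h1 : HasDerivAt (fun y : ℝ => 1 + c₂ * y) c₂ x := by
          simpa using ((hasDerivAt_id x).const_mul c₂).const_add 1
        have h2 := h1.rpow_const (p := -1 / σ) (Or.inl (hu x hx).ne')
        exact h2.const_mul (A * (1 + ε))
      have main' := image_le_of_liminf_slope_right_lt_deriv_boundary'
        (f := F) (f' := fun x => -((k * F x) ^ (1 + σ))) (a := 0) (b := s)
        (B := B) (B' := B') (F_cont s hs)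
        (by -- slope condition
          intro x hx r hr
          have hx0 : 0 ≤ x := hx.1
          have hxs : x < s := hx.2
          have hcont : ContinuousWithinAt (fun z => -((k * F z) ^ (1 + σ))) (Icc 0 s) x := by
            have h1 : ContinuousWithinAt F (Icc 0 s) x := F_cont s hs x ⟨hx0, hxs.le⟩
            have h2 : ContinuousAt (fun y : ℝ => -((k * y) ^ (1 + σ))) (F x) := by
              apply ContinuousAt.neg
              exact ((continuousAt_const.mul continuousAt_id).rpow_const (Or.inr hσ1.le))
            exact h2.comp_continuousWithinAt h1
          have hev : ∀ᶠ z in 𝓝[Icc 0 s] x, -((k * F z) ^ (1 + σ)) < r :=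
            hcont.eventually_lt_const hr
          have hmono : 𝓝[Ioc x s] x ≤ 𝓝[Icc 0 s] x :=
            nhdsWithin_mono x (fun z hz => ⟨hx0.trans hz.1.le, hz.2⟩)
          have hev2 : ∀ᶠ z in 𝓝[Ioc x s] x, slope F x z < r := by
            filter_upwards [hmono hev, eventually_mem_nhdsWithin] with z hz hzmem
            exact lt_of_le_of_lt (slope_le x z hx0 hzmem.1) hz
          have : NeBot (𝓝[Ioc x s] x) := left_nhdsWithin_Ioc_neBot hxs
          exact (hev2.frequently).filter_mono
            (nhdsWithin_mono x (fun z hz => hz.1))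
          )
        (by -- F 0 ≤ B 0
          have h0 : F 0 ≤ A := by
            have := hineq 0 le_rfl
            rw [hAdef, Real.rpow_add hf0' 1 σ, Real.rpow_one]
            calc F 0 ≤ (1 / ω) * f 0 ^ σ * f 0 := this
              _ = f 0 * f 0 ^ σ / ω := by ring
          calc F 0 ≤ A := h0
            _ ≤ B 0 := by
              rw [hBdef]
              simp only [mul_zero, add_zero, Real.one_rpow]
              nlinarith [hε.1]
          )
        (fun x hx => ((hBderiv x hx.1).continuousAt).continuousWithinAt)
        (fun x hx => (hBderiv x hx.1).hasDerivWithinAt)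
        (by -- touching bound
          intro x hx hFB
          show -((k * F x) ^ (1 + σ)) < B' x
          have hupos : 0 < 1 + c₂ * x := hu x hx.1
          have hεp : (0:ℝ) < 1 + ε := by linarith [hε.1]
          have hBx : B x = A * (1 + ε) * (1 + c₂ * x) ^ (-1 / σ) := rfl
          have hB'x : B' x
              = A * (1 + ε) * (c₂ * (-1 / σ) * (1 + c₂ * x) ^ (-1 / σ - 1)) := rfl
          have hkB : k * F x = (f 0 * (1 + ε)) * (1 + c₂ * x) ^ (-1 / σ) := by
            rw [hFB, hBx, ← hkA]; ring
          have e1 : (k * F x) ^ (1 + σ)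
              = f 0 ^ (1 + σ) * ((1 + ε) ^ (1 + σ) * (1 + c₂ * x) ^ (-1 / σ - 1)) := by
            rw [hkB, Real.mul_rpow (by positivity) (Real.rpow_nonneg hupos.le _),
              ← Real.rpow_mul hupos.le, Real.mul_rpow hf0'.le hεp.le]
            rw [show -1 / σ * (1 + σ) = -1 / σ - 1 by field_simp; ring]
            ring
          have hAω : A * ω = f 0 ^ (1 + σ) := by
            rw [hAdef]; field_simp
          have e2 : B' x
              = -(f 0 ^ (1 + σ) * ((1 + ε) * (1 - ε) * (1 + c₂ * x) ^ (-1 / σ - 1))) := by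
            rw [hB'x, ← hAω, hc2]
            field_simp
          rw [e1, e2, neg_lt_neg_iff]
          have hupow : 0 < (1 + c₂ * x) ^ (-1 / σ - 1) := Real.rpow_pos_of_pos hupos _
          have hf0pow : 0 < f 0 ^ (1 + σ) := Real.rpow_pos_of_pos hf0' _
          have h5 : (1 + ε) * (1 - ε) < (1 + ε) ^ (1 + σ) := by
            have h6 : (1:ℝ) ≤ (1 + ε) ^ (1 + σ) := Real.one_le_rpow (by linarith [hε.1]) hσ1.le
            nlinarith [hε.1, hε.2]
          nlinarith [mul_pos (mul_pos hf0pow hupow) (sub_pos.2 h5)])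
      have := main' (right_mem_Icc.2 hs)
      rw [hBdef] at this
      exact this
    -- limit ε → 0
    have hbase : (0:ℝ) < 1 + σ * ω * s := by
      have h9 := mul_nonneg (mul_nonneg hσ.le hω.le) hs
      linarith
    have hT : Tendsto (fun ε : ℝ => A * (1 + ε) * (1 + σ * ω * (1 - ε) * s) ^ (-1 / σ))
        (𝓝[>] (0:ℝ)) (𝓝 (A * (1 + σ * ω * s) ^ (-1 / σ))) := by
      have hca : ContinuousAt
          (fun ε : ℝ => A * (1 + ε) * (1 + σ * ω * (1 - ε) * s) ^ (-1 / σ)) 0 := by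
        apply ContinuousAt.mul
        · exact continuousAt_const.mul (continuousAt_const.add continuousAt_id)
        · apply ContinuousAt.rpow_const
          · fun_prop
          · left; simp; nlinarith
      have := hca.tendsto
      simp only [add_zero, sub_zero, mul_one] at this
      exact this.mono_left nhdsWithin_le_nhds
    refine ge_of_tendsto hT ?_
    filter_upwards [Ioo_mem_nhdsGT_of_mem (Set.mem_Ico.2 ⟨le_rfl, one_pos⟩)] with ε hε
    exact mainε ε hε
  -- conclusion
  set R : ℝ := (1 + σ) / (1 + ω * σ * t) with hRdef
  have hden : (0:ℝ) < 1 + ω * σ * t := by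
    have h9 := mul_nonneg (mul_nonneg hω.le hσ.le) ht
    linarith
  have hRpos : 0 < R := div_pos hσ1 hden
  by_cases hωt : ω * t ≤ 1
  · have h1 : f t ≤ f 0 := hf_mono self_mem_Ici (mem_Ici.2 ht) ht
    have hR1 : 1 ≤ R := by
      rw [hRdef, le_div_iff₀ hden]
      nlinarith
    have : 1 ≤ R ^ (1 / σ) := Real.one_le_rpow hR1 (by positivity)
    calc f t ≤ f 0 := h1
      _ ≤ f 0 * R ^ (1 / σ) := le_mul_of_one_le_right hf0'.le this
  · push_neg at hωt
    set s : ℝ := (ω * t - 1) / (ω * (1 + σ)) with hsdef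
    have hs0 : 0 ≤ s := div_nonneg (by linarith) (by positivity)
    have hst : s < t := by
      rw [hsdef, div_lt_iff₀ (by positivity)]
      nlinarith
    have hu : 1 + σ * ω * s = (1 + ω * σ * t) / (1 + σ) := by
      rw [hsdef]; field_simp; ring
    have hts : t - s = (1 + ω * σ * t) / (ω * (1 + σ)) := by
      rw [hsdef]; field_simp; ring
    have hchain : g t * (t - s) ≤ A * (1 + σ * ω * s) ^ (-1 / σ) := by
      calc g t * (t - s) ≤ ∫ x in Ico s t, g x := key_low s t hs0 hst.le
        _ ≤ F s := by
            rw [F_split s t hs0 hst.le]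
            linarith [F_nonneg t ht]
        _ ≤ A * (1 + σ * ω * s) ^ (-1 / σ) := main s hs0
    have huR : 1 + σ * ω * s = R⁻¹ := by
      rw [hu, hRdef, inv_div]
    have hRpow : (1 + σ * ω * s) ^ (-1 / σ) = R ^ (1 / σ) := by
      rw [huR, Real.inv_rpow hRpos.le, neg_div, Real.rpow_neg hRpos.le, inv_inv]
    have hgoal : g t ≤ (f 0 * R ^ (1 / σ)) ^ (1 + σ) := by
      have htspos : 0 < t - s := sub_pos.2 hst
      have h1 : g t ≤ A * (1 + σ * ω * s) ^ (-1 / σ) / (t - s) := by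
        rw [le_div_iff₀ htspos]
        exact hchain
      have h2 : A * (1 + σ * ω * s) ^ (-1 / σ) / (t - s)
          = (f 0 * R ^ (1 / σ)) ^ (1 + σ) := by
        rw [hRpow, hts, hAdef]
        rw [Real.mul_rpow hf0'.le (Real.rpow_nonneg hRpos.le _),
          ← Real.rpow_mul hRpos.le]
        rw [show (1:ℝ) / σ * (1 + σ) = 1 + 1 / σ by field_simp; ring]
        rw [Real.rpow_add hRpos, Real.rpow_one]
        rw [hRdef]
        field_simp
      rw [← h2]; exact h1
    have := (Real.rpow_le_rpow_iff (hf_nonneg t ht)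
      (mul_nonneg hf0'.le (Real.rpow_nonneg hRpos.le _)) hσ1).1 hgoal
    exact this
end

section
/- Let f : [0,∞) → [0,∞) be a nonincreasing function and ω > 0 a constant such that ∫_t^∞ f(s) ds ≤ (1/ω) f(t) for all t ≥ 0. Then f(t) ≤ f(0) e^{1-ωt} for all t ≥ 0. -/
open MeasureTheory Set Filter

theorem martinez_decay_exp (f : ℝ → ℝ) (ω : ℝ) (hω : 0 < ω)
    (hf_nonneg : ∀ t, 0 ≤ t → 0 ≤ f t)
    (hf_mono : AntitoneOn f (Ici 0))
    (hf_meas : Measurable f)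
    (hf_int : ∀ t, 0 ≤ t → IntegrableOn f (Ici t))
    (hineq : ∀ t, 0 ≤ t → ∫ s in Ici t, f s ≤ (1 / ω) * f t) :
    ∀ t, 0 ≤ t → f t ≤ f 0 * Real.exp (1 - ω * t) := by
  set E : ℝ → ℝ := fun t => ∫ s in Ici t, f s with hE
  have hEnn : ∀ t, 0 ≤ t → 0 ≤ E t := fun t ht =>
    setIntegral_nonneg measurableSet_Ici (fun s hs => hf_nonneg s (le_trans ht hs))
  -- step inequality
  have hstep : ∀ t h : ℝ, 0 ≤ t → 0 < h → (1 + ω * h) * E (t + h) ≤ E t := by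
    intro t h ht hh
    have hth : (0:ℝ) ≤ t + h := by linarith
    have hIco : IntegrableOn f (Ico t (t+h)) :=
      (hf_int t ht).mono_set Ico_subset_Ici_self
    have hsplit : E t = (∫ s in Ico t (t+h), f s) + E (t + h) := by
      rw [hE]
      simp only
      rw [← Ico_union_Ici_eq_Ici (by linarith : t ≤ t + h),
        setIntegral_union (by
          rw [Set.disjoint_left]; intro a ha hb
          exact absurd hb (not_le.mpr ha.2)) measurableSet_Ici hIco (hf_int (t+h) hth)]
    have hlow : h * f (t + h) ≤ ∫ s in Ico t (t+h), f s := by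
      have : ∫ s in Ico t (t+h), f (t+h) ≤ ∫ s in Ico t (t+h), f s := by
        apply setIntegral_mono_on ((integrableOn_const_iff (C := f (t+h))).mpr (Or.inr (by
          rw [Real.volume_Ico]; exact ENNReal.ofReal_lt_top))) hIco measurableSet_Ico
        intro s hs
        exact hf_mono (le_trans ht hs.1) hth (le_of_lt hs.2)
      calc h * f (t+h) = ∫ _ in Ico t (t+h), f (t+h) := by
            rw [setIntegral_const, Real.volume_real_Ico_of_le (by linarith),
              smul_eq_mul]; ring
        _ ≤ _ := this
    have hωE : ω * E (t + h) ≤ f (t + h) := by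
      have := hineq (t+h) hth
      rw [div_mul_eq_mul_div, one_mul, le_div_iff₀ hω] at this
      linarith [this]
    nlinarith [hEnn (t+h) hth]
  -- iterate
  have hiter : ∀ (n : ℕ) (h : ℝ), 0 < h → (1 + ω * h) ^ n * E ((n : ℝ) * h) ≤ E 0 := by
    intro n
    induction n with
    | zero => intro h hh; simp
    | succ n ih =>
      intro h hh
      have h1 : (0:ℝ) ≤ (n:ℝ) * h := by positivity
      have h2 : (0:ℝ) ≤ 1 + ω * h := by nlinarith
      have := hstep ((n:ℝ)*h) h h1 hh
      push_cast
      calc (1 + ω * h) ^ (n+1) * E (((n:ℝ)+1) * h)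
          = (1 + ω * h) ^ n * ((1 + ω * h) * E ((n:ℝ)*h + h)) := by push_cast; ring_nf
        _ ≤ (1 + ω * h) ^ n * E ((n:ℝ)*h) := by
            apply mul_le_mul_of_nonneg_left this (by positivity)
        _ ≤ E 0 := ih h hh
  -- exponential bound on E
  have hEexp : ∀ t, 0 ≤ t → E t * Real.exp (ω * t) ≤ E 0 := by
    intro t ht
    rcases eq_or_lt_of_le ht with h0 | h0
    · rw [← h0]; simp
    · have hlim : Tendsto (fun n : ℕ => (1 + (ω * t) / n) ^ n * E t) atTop
          (nhds (Real.exp (ω * t) * E t)) :=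
        (Real.tendsto_one_add_div_pow_exp (ω * t)).mul_const (E t)
      have hev : ∀ᶠ n : ℕ in atTop, (1 + (ω * t) / n) ^ n * E t ≤ E 0 := by
        filter_upwards [eventually_ge_atTop 1] with n hn
        have hn' : (0:ℝ) < n := by exact_mod_cast hn
        have := hiter n (t / n) (by positivity)
        rw [mul_div_cancel₀ _ (ne_of_gt hn')] at this
        have : (1 + ω * (t / n)) ^ n * E t ≤ E 0 := this
        convert this using 3
        ring
      have := le_of_tendsto hlim hev
      linarith [this]
  intro t ht
  have hf0 : 0 ≤ f 0 := hf_nonneg 0 le_rfl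
  by_cases hcase : ω * t ≤ 1
  · have h1 : f t ≤ f 0 := hf_mono self_mem_Ici ht ht
    have h2 : (1:ℝ) ≤ Real.exp (1 - ω * t) := Real.one_le_exp (by linarith)
    nlinarith
  · push_neg at hcase
    set u := t - 1/ω with hu
    have hu0 : 0 ≤ u := by
      rw [hu, sub_nonneg, div_le_iff₀ hω]
      nlinarith
    have hut : u ≤ t := by rw [hu]; nlinarith [one_div_pos.mpr hω]
    have hIcc : IntegrableOn f (Icc u t) := (hf_int u hu0).mono_set Icc_subset_Ici_self
    have hlow : (1/ω) * f t ≤ ∫ s in Icc u t, f s := by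
      have hm : ∫ s in Icc u t, f t ≤ ∫ s in Icc u t, f s := by
        apply setIntegral_mono_on ((integrableOn_const_iff (C := f t)).mpr (Or.inr (by
          rw [Real.volume_Icc]; exact ENNReal.ofReal_lt_top))) hIcc measurableSet_Icc
        intro s hs
        exact hf_mono (le_trans hu0 hs.1) (le_trans hu0 hut) hs.2
      calc (1/ω) * f t = ∫ _ in Icc u t, f t := by
            rw [setIntegral_const, Real.volume_real_Icc_of_le (by linarith),
              smul_eq_mul, hu]; ring
        _ ≤ _ := hm
    have hsub : ∫ s in Icc u t, f s ≤ E u := by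
      exact setIntegral_mono_set (hf_int u hu0)
        ((ae_restrict_iff' measurableSet_Ici).mpr (Filter.Eventually.of_forall
          fun s hs => hf_nonneg s (le_trans hu0 hs)))
        (HasSubset.Subset.eventuallyLE Icc_subset_Ici_self)
    have hEu := hEexp u hu0
    have hE0 := hineq 0 le_rfl
    have hexp : Real.exp (ω * u) > 0 := Real.exp_pos _
    have key : E u ≤ (1/ω) * f 0 * Real.exp (-(ω * u)) := by
      rw [Real.exp_neg, ← div_eq_mul_inv, le_div_iff₀ hexp]
      calc E u * Real.exp (ω * u) ≤ E 0 := hEu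
        _ ≤ (1/ω) * f 0 := by simpa using hE0
    have harg : -(ω * u) = 1 - ω * t := by rw [hu]; field_simp; ring
    rw [harg] at key
    have : (1/ω) * f t ≤ (1/ω) * (f 0 * Real.exp (1 - ω * t)) := by
      calc (1/ω) * f t ≤ ∫ s in Icc u t, f s := hlow
        _ ≤ E u := hsub
        _ ≤ (1/ω) * f 0 * Real.exp (1 - ω * t) := key
        _ = (1/ω) * (f 0 * Real.exp (1 - ω * t)) := by ring
    have h1ω : 0 < 1/ω := by positivity
    exact le_of_mul_le_mul_left this h1ω
end
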